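/- Let G be a reaction network with source vertex set V_{G,s}. There exists a flux vector J on G such that (G, J) is flux equivalent to some complex-balanced flux system if and only if there exists a flux vector J on G such that (G, J) is flux equivalent to some complex-balanced flux system (G', J') with V_{G'} ⊆ V_{G,s}. -/
import Mathlib


open Finset

noncomputable section
open scoped Classical

abbrev Vtx (n : ℕ) := Fin n → ℝ

/-- A reaction network: a finite set of directed edges between points of ℝⁿ. -/
abbrev Net (n : ℕ) := Finset (Vtx n × Vtx n)

variable {n : ℕ}

/-- The vertices of a network. -/
def verts (G : Net n) : Finset (Vtx n) := G.image Prod.fst ∪ G.image Prod.snd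

/-- The source vertices of a network. -/
def sources (G : Net n) : Finset (Vtx n) := G.image Prod.fst

/-- No self-loops. -/
def NoLoops (G : Net n) : Prop := ∀ e ∈ G, e.1 ≠ e.2

/-- `J` is a flux vector on `G`: positive on edges, zero on non-edges. -/
def IsFlux (G : Net n) (J : Vtx n × Vtx n → ℝ) : Prop :=
  (∀ e ∈ G, 0 < J e) ∧ ∀ e, e ∉ G → J e = 0

/-- Total outgoing flux at a vertex. -/
def outSum (G : Net n) (J : Vtx n × Vtx n → ℝ) (v : Vtx n) : ℝ :=
  ∑ e ∈ G.filter (fun e => e.1 = v), J e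

/-- Total incoming flux at a vertex. -/
def inSum (G : Net n) (J : Vtx n × Vtx n → ℝ) (v : Vtx n) : ℝ :=
  ∑ e ∈ G.filter (fun e => e.2 = v), J e

/-- Potential at a vertex: incoming minus outgoing flux (0 off the graph). -/
def potential (G : Net n) (J : Vtx n × Vtx n → ℝ) (v : Vtx n) : ℝ :=
  inSum G J v - outSum G J v

/-- Complex-balanced flux: in-flux equals out-flux at every vertex. -/
def ComplexBalanced (G : Net n) (J : Vtx n × Vtx n → ℝ) : Prop :=
  ∀ v ∈ verts G, inSum G J v = outSum G J v

/-- Detailed-balanced flux: every edge is reversible and paired fluxes agree. -/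
def DetailedBalanced (G : Net n) (J : Vtx n × Vtx n → ℝ) : Prop :=
  ∀ e ∈ G, (e.2, e.1) ∈ G ∧ J e = J (e.2, e.1)

/-- Steady state flux: flux-weighted reaction vectors sum to zero. -/
def SteadyFlux (G : Net n) (J : Vtx n × Vtx n → ℝ) : Prop :=
  ∑ e ∈ G, J e • (e.2 - e.1) = 0

/-- Flux-weighted sum of outgoing reaction vectors at a vertex. -/
def netOut (G : Net n) (J : Vtx n × Vtx n → ℝ) (v : Vtx n) : Vtx n :=
  ∑ e ∈ G.filter (fun e => e.1 = v), J e • (e.2 - e.1)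

/-- Flux equivalence of two flux systems. -/
def FluxEquiv (G : Net n) (J : Vtx n × Vtx n → ℝ)
    (G' : Net n) (J' : Vtx n × Vtx n → ℝ) : Prop :=
  ∀ v ∈ verts G ∪ verts G', netOut G J v = netOut G' J' v

/-- Reachability along directed edges. -/
def Reachable (G : Net n) : Vtx n → Vtx n → Prop :=
  Relation.ReflTransGen (fun a b => (a, b) ∈ G)

/-- Weak reversibility: every edge lies on a directed cycle. -/
def WeaklyReversible (G : Net n) : Prop := ∀ e ∈ G, Reachable G e.2 e.1

/-- Reversibility: every edge has its reverse in the network. -/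
def Reversible (G : Net n) : Prop := ∀ e ∈ G, (e.2, e.1) ∈ G

/-- Positive state. -/
def Pos (x : Vtx n) : Prop := ∀ i, 0 < x i

/-- Monomial `x^y = ∏ xᵢ^{yᵢ}` (real exponents). -/
def mono (x y : Vtx n) : ℝ := ∏ i, x i ^ y i

/-- `k` is a vector of rate constants on `G`: positive on edges, zero off. -/
def IsMAS (G : Net n) (k : Vtx n × Vtx n → ℝ) : Prop :=
  (∀ e ∈ G, 0 < k e) ∧ ∀ e, e ∉ G → k e = 0

/-- The mass-action vector field of `G_k`. -/
def maf (G : Net n) (k : Vtx n × Vtx n → ℝ) (x : Vtx n) : Vtx n :=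
  ∑ e ∈ G, (k e * mono x e.1) • (e.2 - e.1)

/-- Dynamical equivalence of mass-action systems. -/
def DynEquiv (G : Net n) (k : Vtx n × Vtx n → ℝ)
    (G' : Net n) (k' : Vtx n × Vtx n → ℝ) : Prop :=
  ∀ x : Vtx n, Pos x → maf G k x = maf G' k' x

/-- `x` is a complex-balanced steady state of `G_k`. -/
def CBsteady (G : Net n) (k : Vtx n × Vtx n → ℝ) (x : Vtx n) : Prop :=
  ∀ v ∈ verts G,
    (∑ e ∈ G.filter (fun e => e.1 = v), k e * mono x v)
      = ∑ e ∈ G.filter (fun e => e.2 = v), k e * mono x e.1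

/-- The stoichiometric subspace of a network. -/
def stoichSubspace (G : Net n) : Submodule ℝ (Vtx n) :=
  Submodule.span ℝ {d | ∃ e ∈ G, d = e.2 - e.1}

/-- Undirected connectivity relation of a network. -/
def connRel (G : Net n) : Vtx n → Vtx n → Prop :=
  Relation.ReflTransGen (fun a b => (a, b) ∈ G ∨ (b, a) ∈ G)

/-- The number of connected components of a network. -/
def numComponents (G : Net n) : ℕ :=
  ((verts G).image (fun v => (verts G).filter (fun w => connRel G v w))).card

/-- The deficiency of a network. -/
def deficiency (G : Net n) : ℤ :=
  (verts G).card - numComponents G - Module.finrank ℝ (stoichSubspace G)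


lemma mem_verts_fst {G : Net n} {e : Vtx n × Vtx n} (he : e ∈ G) : e.1 ∈ verts G := by
  simp only [verts, Finset.mem_union, Finset.mem_image]
  exact Or.inl ⟨e, he, rfl⟩

lemma mem_verts_snd {G : Net n} {e : Vtx n × Vtx n} (he : e ∈ G) : e.2 ∈ verts G := by
  simp only [verts, Finset.mem_union, Finset.mem_image]
  exact Or.inr ⟨e, he, rfl⟩

lemma mem_verts_iff {G : Net n} {w : Vtx n} :
    w ∈ verts G ↔ ∃ e ∈ G, e.1 = w ∨ e.2 = w := by
  simp only [verts, Finset.mem_union, Finset.mem_image]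
  constructor
  · rintro (⟨e, he, rfl⟩ | ⟨e, he, rfl⟩)
    · exact ⟨e, he, Or.inl rfl⟩
    · exact ⟨e, he, Or.inr rfl⟩
  · rintro ⟨e, he, (rfl | rfl)⟩
    · exact Or.inl ⟨e, he, rfl⟩
    · exact Or.inr ⟨e, he, rfl⟩

lemma sum_reduce {M : Type*} [AddCommMonoid M] {G E : Net n} (hGE : G ⊆ E)
    {F : Vtx n × Vtx n → M} (hF : ∀ e ∉ G, F e = 0)
    (P : Vtx n × Vtx n → Prop) [DecidablePred P] :
    ∑ e ∈ G.filter P, F e = ∑ e ∈ E.filter P, F e := by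
  apply Finset.sum_subset (Finset.filter_subset_filter P hGE)
  intro e he hne
  by_cases hG : e ∈ G
  · exact absurd (Finset.mem_filter.2 ⟨hG, (Finset.mem_filter.1 he).2⟩) hne
  · exact hF e hG

lemma sum_fst {M : Type*} [AddCommMonoid M] {S : Finset (Vtx n)} {w : Vtx n} (hw : w ∈ S)
    (g : Vtx n × Vtx n → M) :
    ∑ e ∈ (S ×ˢ S).filter (fun e => e.1 = w), g e = ∑ y ∈ S, g (w, y) := by
  rw [Finset.sum_filter, Finset.sum_product]
  rw [Finset.sum_eq_single w (fun u _ hu => by simp [hu]) (fun h => absurd hw h)]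
  simp

lemma sum_snd {M : Type*} [AddCommMonoid M] {S : Finset (Vtx n)} {w : Vtx n} (hw : w ∈ S)
    (g : Vtx n × Vtx n → M) :
    ∑ e ∈ (S ×ˢ S).filter (fun e => e.2 = w), g e = ∑ u ∈ S, g (u, w) := by
  rw [Finset.sum_filter, Finset.sum_product_right]
  rw [Finset.sum_eq_single w (fun u _ hu => by simp [hu]) (fun h => absurd hw h)]
  simp

lemma deLoop (G : Net n) (J : Vtx n × Vtx n → ℝ) (G' : Net n) (J' : Vtx n × Vtx n → ℝ)
    (hF : IsFlux G' J') (hCB : ComplexBalanced G' J') (hE : FluxEquiv G J G' J') :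
    ∃ (L : Net n) (JL : Vtx n × Vtx n → ℝ), NoLoops L ∧ IsFlux L JL ∧
      ComplexBalanced L JL ∧ FluxEquiv G J L JL ∧ verts L ⊆ verts G' := by
  set L : Net n := G'.filter (fun e => e.1 ≠ e.2) with hL
  set JL : Vtx n × Vtx n → ℝ := fun e => if e.1 ≠ e.2 then J' e else 0 with hJLdef
  have hJLeq : ∀ e, JL e = if e.1 ≠ e.2 then J' e else 0 := fun e => by rw [hJLdef]
  have hLsub : L ⊆ G' := Finset.filter_subset _ _
  have hJL0 : ∀ e ∉ L, JL e = 0 := by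
    intro e he
    rw [hJLeq e]
    by_cases h : e.1 ≠ e.2
    · have : e ∉ G' := fun hG => he (Finset.mem_filter.2 ⟨hG, h⟩)
      rw [if_pos h, hF.2 e this]
    · rw [if_neg h]
  have hvL : verts L ⊆ verts G' := by
    intro w hw
    obtain ⟨e, he, h⟩ := mem_verts_iff.1 hw
    exact mem_verts_iff.2 ⟨e, hLsub he, h⟩
  refine ⟨L, JL, ?_, ?_, ?_, ?_, hvL⟩
  · intro e he; exact (Finset.mem_filter.1 he).2
  · constructor
    · intro e he
      have h2 := (Finset.mem_filter.1 he).2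
      rw [hJLeq e, if_pos h2]
      exact hF.1 e (hLsub he)
    · exact hJL0
  · -- complex balance
    have key : ∀ w, inSum G' J' w - inSum L JL w = outSum G' J' w - outSum L JL w := by
      intro w
      have h1 : inSum L JL w = ∑ e ∈ G'.filter (fun e => e.2 = w), JL e :=
        sum_reduce hLsub hJL0 _
      have h2 : outSum L JL w = ∑ e ∈ G'.filter (fun e => e.1 = w), JL e :=
        sum_reduce hLsub hJL0 _
      have h3 : inSum G' J' w = ∑ e ∈ G'.filter (fun e => e.2 = w), J' e := rfl
      have h4 : outSum G' J' w = ∑ e ∈ G'.filter (fun e => e.1 = w), J' e := rfl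
      rw [h1, h2, h3, h4, ← Finset.sum_sub_distrib, ← Finset.sum_sub_distrib,
        Finset.sum_filter, Finset.sum_filter]
      apply Finset.sum_congr rfl
      intro e _
      by_cases hl : e.1 = e.2
      · rw [hl]
      · have hJ : JL e = J' e := by rw [hJLeq e, if_pos hl]
        rw [hJ, sub_self]
        simp
    intro w hw
    have h0 := hCB w (hvL hw)
    have hk := key w
    linarith
  · -- flux equiv
    have hnet : ∀ w, netOut L JL w = netOut G' J' w := by
      intro w
      have h1 : netOut L JL w = ∑ e ∈ G'.filter (fun e => e.1 = w), JL e • (e.2 - e.1) :=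
        sum_reduce (F := fun e => JL e • (e.2 - e.1)) hLsub
          (fun e he => by show JL e • (e.2 - e.1) = 0; rw [hJL0 e he, zero_smul]) _
      rw [h1]
      apply Finset.sum_congr rfl
      intro e _
      by_cases hl : e.1 = e.2
      · have h0 : e.2 - e.1 = 0 := by rw [hl, sub_self]
        rw [h0, smul_zero, smul_zero]
      · rw [hJLeq e, if_pos hl]
    intro w hw
    rw [hnet w]
    apply hE w
    rcases Finset.mem_union.1 hw with h | h
    · exact Finset.mem_union_left _ h
    · exact Finset.mem_union_right _ (hvL h)

lemma bypass (G : Net n) (J : Vtx n × Vtx n → ℝ) :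
    ∀ m : ℕ, ∀ (G' : Net n) (J' : Vtx n × Vtx n → ℝ), NoLoops G' → IsFlux G' J' →
      ComplexBalanced G' J' → FluxEquiv G J G' J' →
      ((verts G') \ sources G).card ≤ m →
      ∃ (G'' : Net n) (J'' : Vtx n × Vtx n → ℝ), IsFlux G'' J'' ∧
        ComplexBalanced G'' J'' ∧ FluxEquiv G J G'' J'' ∧ verts G'' ⊆ sources G := by
  intro m
  induction m with
  | zero =>
    intro G' J' hnl hF hCB hE hcard
    refine ⟨G', J', hF, hCB, hE, ?_⟩
    rw [Nat.le_zero, Finset.card_eq_zero, Finset.sdiff_eq_empty_iff_subset] at hcard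
    exact hcard
  | succ m ih =>
    intro G' J' hnl hF hCB hE hcard
    by_cases hsub : verts G' ⊆ sources G
    · exact ⟨G', J', hF, hCB, hE, hsub⟩
    obtain ⟨v, hv, hvs⟩ := Finset.not_subset.1 hsub
    set S := verts G' with hS
    have hJ'0 : ∀ e ∉ G', J' e = 0 := hF.2
    have hJ'nonneg : ∀ e, 0 ≤ J' e := by
      intro e
      by_cases h : e ∈ G'
      · exact (hF.1 e h).le
      · rw [hJ'0 e h]
    have hG'S : G' ⊆ S ×ˢ S := fun e he =>
      Finset.mem_product.2 ⟨mem_verts_fst he, mem_verts_snd he⟩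
    -- netOut of G' at v is zero
    have hnov : netOut G' J' v = 0 := by
      have h1 : G.filter (fun e => e.1 = v) = ∅ := by
        rw [Finset.filter_eq_empty_iff]
        intro e he hev
        exact hvs (Finset.mem_image.2 ⟨e, he, hev⟩)
      have h2 : netOut G J v = 0 := by rw [netOut, h1, Finset.sum_empty]
      rw [← hE v (Finset.mem_union_right _ hv), h2]
    -- sum formulas over S
    have hout' : ∀ w ∈ S, outSum G' J' w = ∑ y ∈ S, J' (w, y) := fun w hw =>
      (sum_reduce hG'S hJ'0 (fun e => e.1 = w)).trans (sum_fst hw (fun e => J' e))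
    have hin' : ∀ w ∈ S, inSum G' J' w = ∑ u ∈ S, J' (u, w) := fun w hw =>
      (sum_reduce hG'S hJ'0 (fun e => e.2 = w)).trans (sum_snd hw (fun e => J' e))
    have hnet' : ∀ w ∈ S, netOut G' J' w = ∑ y ∈ S, J' (w, y) • (y - w) := fun w hw =>
      (sum_reduce (F := fun e => J' e • (e.2 - e.1)) hG'S
        (fun e he => by show J' e • (e.2 - e.1) = 0; rw [hJ'0 e he, zero_smul])
        (fun e => e.1 = w)).trans (sum_fst hw (fun e => J' e • (e.2 - e.1)))
    set T := outSum G' J' v with hTdef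
    have hT : 0 < T := by
      obtain ⟨e, he, hor⟩ := mem_verts_iff.1 hv
      rcases hor with h | h
      · apply Finset.sum_pos
        · intro e' he'
          exact hF.1 e' (Finset.mem_filter.1 he').1
        · exact ⟨e, Finset.mem_filter.2 ⟨he, h⟩⟩
      · rw [hTdef, ← hCB v hv]
        apply Finset.sum_pos
        · intro e' he'
          exact hF.1 e' (Finset.mem_filter.1 he').1
        · exact ⟨e, Finset.mem_filter.2 ⟨he, h⟩⟩
    have hTsum : ∑ y ∈ S, J' (v, y) = T := (hout' v hv).symm
    have hTin : ∑ u ∈ S, J' (u, v) = T := by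
      rw [← hin' v hv, hCB v hv]
    have hvc : ∑ y ∈ S, J' (v, y) • y = T • v := by
      have h0 : ∑ y ∈ S, J' (v, y) • (y - v) = 0 := by rw [← hnet' v hv, hnov]
      have h1 : ∑ y ∈ S, J' (v, y) • y - (∑ y ∈ S, J' (v, y)) • v = 0 := by
        rw [Finset.sum_smul, ← Finset.sum_sub_distrib]
        rw [← h0]
        exact Finset.sum_congr rfl (fun y _ => (smul_sub _ _ _).symm)
      rw [hTsum] at h1
      rw [← sub_eq_zero]
      exact h1
    -- the bypass network
    set G'' : Net n := (G'.filter (fun e => e.1 ≠ v ∧ e.2 ≠ v)) ∪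
      (((G'.filter (fun e => e.2 = v)) ×ˢ (G'.filter (fun e => e.1 = v))).image
        (fun p => (p.1.1, p.2.2))).filter (fun e => e.1 ≠ e.2) with hG''def
    set J'' : Vtx n × Vtx n → ℝ := fun e =>
      (if e ∈ G' ∧ e.1 ≠ v ∧ e.2 ≠ v then J' e else 0) +
      (if e.1 ≠ e.2 then J' (e.1, v) * J' (v, e.2) / T else 0) with hJ''def
    have hJ''eq : ∀ u y : Vtx n, J'' (u, y) =
        (if (u, y) ∈ G' ∧ u ≠ v ∧ y ≠ v then J' (u, y) else 0) +
        (if u ≠ y then J' (u, v) * J' (v, y) / T else 0) := by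
      intro u y; rw [hJ''def]
    have hmem : ∀ e : Vtx n × Vtx n, e ∈ G'' ↔
        (e ∈ G' ∧ e.1 ≠ v ∧ e.2 ≠ v) ∨
        ((e.1, v) ∈ G' ∧ (v, e.2) ∈ G' ∧ e.1 ≠ e.2) := by
      intro e
      rw [hG''def, Finset.mem_union, Finset.mem_filter, Finset.mem_filter]
      constructor
      · rintro (h | ⟨h1, h2⟩)
        · exact Or.inl h
        · right
          obtain ⟨p, hp, hpe⟩ := Finset.mem_image.1 h1
          obtain ⟨hp1, hp2⟩ := Finset.mem_product.1 hp
          obtain ⟨hp1g, hp1v⟩ := Finset.mem_filter.1 hp1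
          obtain ⟨hp2g, hp2v⟩ := Finset.mem_filter.1 hp2
          refine ⟨?_, ?_, h2⟩
          · have h3 : (e.1, v) = p.1 := by
              rw [← hpe, ← hp1v]
            rw [h3]; exact hp1g
          · have h3 : (v, e.2) = p.2 := by
              rw [← hpe, ← hp2v]
            rw [h3]; exact hp2g
      · rintro (h | ⟨h1, h2, h3⟩)
        · exact Or.inl h
        · right
          refine ⟨Finset.mem_image.2 ⟨((e.1, v), (v, e.2)), ?_, ?_⟩, h3⟩
          · exact Finset.mem_product.2 ⟨Finset.mem_filter.2 ⟨h1, rfl⟩,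
              Finset.mem_filter.2 ⟨h2, rfl⟩⟩
          · rfl
    have hJ''0 : ∀ e ∉ G'', J'' e = 0 := by
      intro e he
      obtain ⟨a, b⟩ := e
      rw [hJ''eq a b]
      have h1 : ¬((a, b) ∈ G' ∧ a ≠ v ∧ b ≠ v) := fun h => he ((hmem (a, b)).2 (Or.inl h))
      rw [if_neg h1, zero_add]
      by_cases h2 : a ≠ b
      · rw [if_pos h2]
        by_cases h3 : (a, v) ∈ G'
        · by_cases h4 : (v, b) ∈ G'
          · exact absurd ((hmem (a, b)).2 (Or.inr ⟨h3, h4, h2⟩)) he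
          · rw [hJ'0 _ h4, mul_zero, zero_div]
        · rw [hJ'0 _ h3, zero_mul, zero_div]
      · rw [if_neg h2]
    have hJ''flux : IsFlux G'' J'' := by
      refine ⟨?_, hJ''0⟩
      intro e he
      obtain ⟨a, b⟩ := e
      have hm := (hmem (a, b)).1 he
      rw [hJ''eq a b]
      have hterm1 : 0 ≤ if (a, b) ∈ G' ∧ a ≠ v ∧ b ≠ v then J' (a, b) else 0 := by
        by_cases h : (a, b) ∈ G' ∧ a ≠ v ∧ b ≠ v
        · rw [if_pos h]; exact hJ'nonneg _
        · rw [if_neg h]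
      have hterm2 : 0 ≤ if a ≠ b then J' (a, v) * J' (v, b) / T else 0 := by
        by_cases h : a ≠ b
        · rw [if_pos h]
          exact div_nonneg (mul_nonneg (hJ'nonneg _) (hJ'nonneg _)) hT.le
        · rw [if_neg h]
      rcases hm with h | ⟨h1, h2, h3⟩
      · apply add_pos_of_pos_of_nonneg _ hterm2
        rw [if_pos h]; exact hF.1 _ h.1
      · apply add_pos_of_nonneg_of_pos hterm1
        rw [if_pos h3]
        exact div_pos (mul_pos (hF.1 _ h1) (hF.1 _ h2)) hT
    have hG''e : ∀ e ∈ G'', e.1 ∈ S ∧ e.1 ≠ v ∧ e.2 ∈ S ∧ e.2 ≠ v := by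
      intro e he
      rcases (hmem e).1 he with ⟨h1, h2, h3⟩ | ⟨h1, h2, h3⟩
      · exact ⟨mem_verts_fst h1, h2, mem_verts_snd h1, h3⟩
      · exact ⟨mem_verts_fst (e := (e.1, v)) h1, hnl _ h1,
          mem_verts_snd (e := (v, e.2)) h2, fun h => hnl _ h2 h.symm⟩
    have hG''S : G'' ⊆ S ×ˢ S := fun e he =>
      Finset.mem_product.2 ⟨(hG''e e he).1, (hG''e e he).2.2.1⟩
    have hvG'' : ∀ w ∈ verts G'', w ∈ S ∧ w ≠ v := by
      intro w hw
      obtain ⟨e, he, hor⟩ := mem_verts_iff.1 hw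
      obtain ⟨ha, hb, hc, hd⟩ := hG''e e he
      rcases hor with rfl | rfl
      · exact ⟨ha, hb⟩
      · exact ⟨hc, hd⟩
    -- netOut of the bypass equals netOut of G' everywhere
    have hnet'' : ∀ w, netOut G'' J'' w = netOut G' J' w := by
      intro w
      by_cases hwS : w ∈ S
      · by_cases hwv : w = v
        · subst hwv
          have h1 : G''.filter (fun e => e.1 = w) = ∅ := by
            rw [Finset.filter_eq_empty_iff]
            intro e he
            exact (hG''e e he).2.1
          rw [netOut, h1, Finset.sum_empty, hnov]
        · have expand : ∀ y ∈ S, J'' (w, y) • (y - w)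
              = (if y = v then 0 else J' (w, y) • (y - w))
                + (J' (w, v) * J' (v, y) / T) • (y - w) := by
            intro y _
            rw [hJ''eq w y, add_smul]
            congr 1
            · by_cases hyv : y = v
              · subst hyv
                rw [if_neg (by tauto), if_pos rfl, zero_smul]
              · rw [if_neg hyv]
                by_cases hg : (w, y) ∈ G'
                · rw [if_pos ⟨hg, hwv, hyv⟩]
                · rw [if_neg (by tauto), hJ'0 _ hg, zero_smul]
            · by_cases hwy : w = y
              · have h0 : y - w = 0 := by rw [hwy, sub_self]
                rw [h0, smul_zero, smul_zero]
              · rw [if_pos hwy]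
          have hpick : ∑ y ∈ S, (if y = v then J' (w, y) • (y - w) else 0)
              = J' (w, v) • (v - w) := by
            rw [Finset.sum_ite_eq' S v (fun y => J' (w, y) • (y - w)), if_pos hv]
          have hsum1 : ∑ y ∈ S, (if y = v then 0 else J' (w, y) • (y - w))
              = (∑ y ∈ S, J' (w, y) • (y - w)) - J' (w, v) • (v - w) := by
            have hsplit : ∑ y ∈ S, J' (w, y) • (y - w)
                = (∑ y ∈ S, (if y = v then 0 else J' (w, y) • (y - w)))
                  + J' (w, v) • (v - w) := by
              rw [← hpick, ← Finset.sum_add_distrib]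
              apply Finset.sum_congr rfl
              intro y _
              by_cases hyv : y = v
              · rw [if_pos hyv, if_pos hyv, zero_add]
              · rw [if_neg hyv, if_neg hyv, add_zero]
            rw [hsplit]; abel
          have hsub : ∑ y ∈ S, J' (v, y) • (y - w) = T • (v - w) := by
            have h1 : ∑ y ∈ S, J' (v, y) • (y - w)
                = (∑ y ∈ S, J' (v, y) • y) - (∑ y ∈ S, J' (v, y)) • w := by
              rw [Finset.sum_smul, ← Finset.sum_sub_distrib]
              exact Finset.sum_congr rfl (fun y _ => smul_sub _ _ _)
            rw [h1, hvc, hTsum, smul_sub]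
          have hsum2 : ∑ y ∈ S, (J' (w, v) * J' (v, y) / T) • (y - w)
              = J' (w, v) • (v - w) := by
            have hstep : ∀ y : Vtx n, (J' (w, v) * J' (v, y) / T) • (y - w)
                = (J' (w, v) / T) • (J' (v, y) • (y - w)) := by
              intro y
              rw [← mul_smul]
              congr 1
              ring
            rw [Finset.sum_congr rfl (fun y _ => hstep y), ← Finset.smul_sum, hsub,
              ← mul_smul, div_mul_cancel₀ _ hT.ne']
          calc netOut G'' J'' w
              = ∑ y ∈ S, J'' (w, y) • (y - w) :=
                (sum_reduce (F := fun e => J'' e • (e.2 - e.1)) hG''S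
                  (fun e he => by show J'' e • (e.2 - e.1) = 0; rw [hJ''0 e he, zero_smul])
                  (fun e => e.1 = w)).trans
                  (sum_fst hwS (fun e => J'' e • (e.2 - e.1)))
            _ = ∑ y ∈ S, ((if y = v then 0 else J' (w, y) • (y - w))
                  + (J' (w, v) * J' (v, y) / T) • (y - w)) := Finset.sum_congr rfl expand
            _ = (∑ y ∈ S, (if y = v then 0 else J' (w, y) • (y - w)))
                  + ∑ y ∈ S, (J' (w, v) * J' (v, y) / T) • (y - w) :=
                Finset.sum_add_distrib
            _ = ((∑ y ∈ S, J' (w, y) • (y - w)) - J' (w, v) • (v - w))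
                  + J' (w, v) • (v - w) := by rw [hsum1, hsum2]
            _ = ∑ y ∈ S, J' (w, y) • (y - w) := by abel
            _ = netOut G' J' w := (hnet' w hwS).symm
      · have h1 : G''.filter (fun e => e.1 = w) = ∅ := by
          rw [Finset.filter_eq_empty_iff]
          intro e he hew
          exact hwS (hew ▸ (hG''e e he).1)
        have h2 : G'.filter (fun e => e.1 = w) = ∅ := by
          rw [Finset.filter_eq_empty_iff]
          intro e he hew
          exact hwS (hew ▸ mem_verts_fst he)
        rw [netOut, netOut, h1, h2]
        simp
    -- complex balance of the bypass
    have hCB'' : ComplexBalanced G'' J'' := by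
      intro w hw
      obtain ⟨hwS, hwv⟩ := hvG'' w hw
      have hCBw := hCB w hwS
      rw [hin' w hwS, hout' w hwS] at hCBw
      have hOut : outSum G'' J'' w
          = ((∑ y ∈ S, J' (w, y)) - J' (w, v))
            + (J' (w, v) - J' (w, v) * J' (v, w) / T) := by
        calc outSum G'' J'' w
            = ∑ y ∈ S, J'' (w, y) :=
              (sum_reduce hG''S hJ''0 (fun e => e.1 = w)).trans
                (sum_fst hwS (fun e => J'' e))
          _ = ∑ y ∈ S, ((if y = v then 0 else J' (w, y))
                + (if y = w then 0 else J' (w, v) * J' (v, y) / T)) := by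
              apply Finset.sum_congr rfl
              intro y _
              rw [hJ''eq w y]
              congr 1
              · by_cases hyv : y = v
                · subst hyv
                  rw [if_neg (by tauto), if_pos rfl]
                · rw [if_neg hyv]
                  by_cases hg : (w, y) ∈ G'
                  · rw [if_pos ⟨hg, hwv, hyv⟩]
                  · rw [if_neg (by tauto), hJ'0 _ hg]
              · by_cases hyw : y = w
                · rw [if_neg (by simp [hyw]), if_pos hyw]
                · rw [if_pos (fun h => hyw h.symm), if_neg hyw]
          _ = ((∑ y ∈ S, J' (w, y)) - J' (w, v))
                + (J' (w, v) - J' (w, v) * J' (v, w) / T) := by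
              rw [Finset.sum_add_distrib]
              congr 1
              · have hpickO : ∑ y ∈ S, (if y = v then J' (w, y) else 0) = J' (w, v) := by
                  rw [Finset.sum_ite_eq' S v (fun y => J' (w, y)), if_pos hv]
                have hsplit : ∑ y ∈ S, J' (w, y)
                    = (∑ y ∈ S, (if y = v then 0 else J' (w, y))) + J' (w, v) := by
                  rw [← hpickO, ← Finset.sum_add_distrib]
                  apply Finset.sum_congr rfl
                  intro y _
                  by_cases hyv : y = v
                  · rw [if_pos hyv, if_pos hyv, zero_add]
                  · rw [if_neg hyv, if_neg hyv, add_zero]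
                rw [hsplit]; ring
              · have hpickW : ∑ y ∈ S, (if y = w then J' (w, v) * J' (v, y) / T else 0)
                    = J' (w, v) * J' (v, w) / T := by
                  rw [Finset.sum_ite_eq' S w (fun y => J' (w, v) * J' (v, y) / T),
                    if_pos hwS]
                have htot : ∑ y ∈ S, J' (w, v) * J' (v, y) / T = J' (w, v) := by
                  rw [← Finset.sum_div, ← Finset.mul_sum, hTsum, mul_div_assoc,
                    div_self hT.ne', mul_one]
                have hsplit : ∑ y ∈ S, J' (w, v) * J' (v, y) / T
                    = (∑ y ∈ S, (if y = w then 0 else J' (w, v) * J' (v, y) / T))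
                      + J' (w, v) * J' (v, w) / T := by
                  rw [← hpickW, ← Finset.sum_add_distrib]
                  apply Finset.sum_congr rfl
                  intro y _
                  by_cases hyw : y = w
                  · rw [if_pos hyw, if_pos hyw, zero_add]
                  · rw [if_neg hyw, if_neg hyw, add_zero]
                rw [htot] at hsplit
                linarith
      have hIn : inSum G'' J'' w
          = ((∑ u ∈ S, J' (u, w)) - J' (v, w))
            + (J' (v, w) - J' (v, w) * J' (w, v) / T) := by
        calc inSum G'' J'' w
            = ∑ u ∈ S, J'' (u, w) :=
              (sum_reduce hG''S hJ''0 (fun e => e.2 = w)).trans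
                (sum_snd hwS (fun e => J'' e))
          _ = ∑ u ∈ S, ((if u = v then 0 else J' (u, w))
                + (if u = w then 0 else J' (u, v) * J' (v, w) / T)) := by
              apply Finset.sum_congr rfl
              intro u _
              rw [hJ''eq u w]
              congr 1
              · by_cases huv : u = v
                · subst huv
                  rw [if_neg (by tauto), if_pos rfl]
                · rw [if_neg huv]
                  by_cases hg : (u, w) ∈ G'
                  · rw [if_pos ⟨hg, huv, hwv⟩]
                  · rw [if_neg (by tauto), hJ'0 _ hg]
              · by_cases huw : u = w
                · rw [if_neg (by simp [huw]), if_pos huw]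
                · rw [if_pos huw, if_neg huw]
          _ = ((∑ u ∈ S, J' (u, w)) - J' (v, w))
                + (J' (v, w) - J' (v, w) * J' (w, v) / T) := by
              rw [Finset.sum_add_distrib]
              congr 1
              · have hpickI : ∑ u ∈ S, (if u = v then J' (u, w) else 0) = J' (v, w) := by
                  rw [Finset.sum_ite_eq' S v (fun u => J' (u, w)), if_pos hv]
                have hsplit : ∑ u ∈ S, J' (u, w)
                    = (∑ u ∈ S, (if u = v then 0 else J' (u, w))) + J' (v, w) := by
                  rw [← hpickI, ← Finset.sum_add_distrib]
                  apply Finset.sum_congr rfl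
                  intro u _
                  by_cases huv : u = v
                  · rw [if_pos huv, if_pos huv, zero_add]
                  · rw [if_neg huv, if_neg huv, add_zero]
                rw [hsplit]; ring
              · have hpickW : ∑ u ∈ S, (if u = w then J' (u, v) * J' (v, w) / T else 0)
                    = J' (w, v) * J' (v, w) / T := by
                  rw [Finset.sum_ite_eq' S w (fun u => J' (u, v) * J' (v, w) / T),
                    if_pos hwS]
                have htot : ∑ u ∈ S, J' (u, v) * J' (v, w) / T = J' (v, w) := by
                  rw [← Finset.sum_div, ← Finset.sum_mul, hTin, mul_comm, mul_div_assoc,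
                    div_self hT.ne', mul_one]
                have hsplit : ∑ u ∈ S, J' (u, v) * J' (v, w) / T
                    = (∑ u ∈ S, (if u = w then 0 else J' (u, v) * J' (v, w) / T))
                      + J' (w, v) * J' (v, w) / T := by
                  rw [← hpickW, ← Finset.sum_add_distrib]
                  apply Finset.sum_congr rfl
                  intro u _
                  by_cases huw : u = w
                  · rw [if_pos huw, if_pos huw, zero_add]
                  · rw [if_neg huw, if_neg huw, add_zero]
                rw [htot] at hsplit
                rw [mul_comm (J' (v, w)) (J' (w, v))]
                linarith
      rw [hOut, hIn, hCBw]
      ring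
    -- flux equivalence of the bypass with G
    have hE'' : FluxEquiv G J G'' J'' := by
      intro w hw
      rw [hnet'' w]
      apply hE w
      rcases Finset.mem_union.1 hw with h | h
      · exact Finset.mem_union_left _ h
      · exact Finset.mem_union_right _ ((hvG'' w h).1)
    -- no loops in the bypass
    have hnl'' : NoLoops G'' := by
      intro e he
      rcases (hmem e).1 he with ⟨h1, _, _⟩ | ⟨_, _, h3⟩
      · exact hnl e h1
      · exact h3
    -- cardinality decreases
    apply ih G'' J'' hnl'' hJ''flux hCB'' hE''
    have hsubcard : (verts G'') \ sources G ⊆ ((verts G') \ sources G).erase v := by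
      intro w hw
      obtain ⟨hw1, hw2⟩ := Finset.mem_sdiff.1 hw
      obtain ⟨hwS, hwv⟩ := hvG'' w hw1
      exact Finset.mem_erase.2 ⟨hwv, Finset.mem_sdiff.2 ⟨hwS, hw2⟩⟩
    have h1 := Finset.card_le_card hsubcard
    rw [Finset.card_erase_of_mem (Finset.mem_sdiff.2 ⟨hv, hvs⟩)] at h1
    omega

theorem stmt19 (G : Net n) :
    (∃ J : Vtx n × Vtx n → ℝ, IsFlux G J ∧
      ∃ (G' : Net n) (J' : Vtx n × Vtx n → ℝ),
        IsFlux G' J' ∧ ComplexBalanced G' J' ∧ FluxEquiv G J G' J') ↔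
    (∃ J : Vtx n × Vtx n → ℝ, IsFlux G J ∧
      ∃ (G' : Net n) (J' : Vtx n × Vtx n → ℝ),
        IsFlux G' J' ∧ ComplexBalanced G' J' ∧ FluxEquiv G J G' J' ∧
          verts G' ⊆ sources G) := by
  constructor
  · rintro ⟨J, hJ, G', J', hF', hCB', hE'⟩
    obtain ⟨L, JL, hnl, hLF, hLCB, hLE, _⟩ := deLoop G J G' J' hF' hCB' hE'
    obtain ⟨G'', J'', h1, h2, h3, h4⟩ :=
      bypass G J ((verts L \ sources G).card) L JL hnl hLF hLCB hLE le_rfl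
    exact ⟨J, hJ, G'', J'', h1, h2, h3, h4⟩
  · rintro ⟨J, hJ, G', J', hF', hCB', hE', _⟩
    exact ⟨J, hJ, G', J', hF', hCB', hE'⟩
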